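/- Let S be a cancellative monoid of I-type with I-structure v : ℕⁿ → S, let φ : ℕⁿ → Sym(n) be defined (as in the theory of I-structures) so that v(a+b) = v(φ(b)(a))·v(b), and suppose t₁,…,tₙ > 0 satisfy φ(tᵢ·eᵢ) = id for all i. Let P₀ be the submonoid of ℕⁿ generated by the elements tᵢ·eᵢ. Then v restricted to P₀ is a monoid homomorphism onto a free abelian submonoid of S of rank n, freely generated by the elements v(tᵢ·eᵢ). -/

import Mathlib

/-- The action of a permutation on the free commutative monoid `ℕⁿ`
(permuting the generators). -/
def permAct {n : ℕ} (σ : Equiv.Perm (Fin n)) (a : Fin n → ℕ) : Fin n → ℕ :=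
  fun i => a (σ⁻¹ i)

lemma permAct_one {n : ℕ} (a : Fin n → ℕ) : permAct 1 a = a := rfl

theorem free_abelian_submonoid_of_I_type {n : ℕ} {S : Type*} [Monoid S]
    (hcancel : ∀ a b c : S, (a * b = a * c → b = c) ∧ (b * a = c * a → b = c))
    (x : Fin n → S) (hgen : Submonoid.closure (Set.range x) = ⊤)
    (v : (Fin n → ℕ) → S) (hbij : Function.Bijective v) (hone : v 0 = 1)
    (φ : (Fin n → ℕ) → Equiv.Perm (Fin n))
    (hφ : ∀ a b : Fin n → ℕ, v (a + b) = v (permAct (φ b) a) * v b)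
    (hcoc : ∀ b c : Fin n → ℕ, φ (b + c) = φ (permAct (φ c) b) * φ c)
    (t : Fin n → ℕ) (ht : ∀ i, 0 < t i)
    (hker : ∀ i, φ (Pi.single i (t i)) = 1) :
    (∀ c d : Fin n → ℕ,
        v (fun i => t i * (c i + d i)) =
          v (fun i => t i * c i) * v (fun i => t i * d i)) ∧
    Function.Injective (fun c : Fin n → ℕ => v (fun i => t i * c i)) ∧
    ∀ i j : Fin n,
      v (Pi.single i (t i)) * v (Pi.single j (t j)) =
        v (Pi.single j (t j)) * v (Pi.single i (t i)) := by
  -- φ vanishes at 0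
  have hφ0 : φ 0 = 1 := by
    have h := hcoc 0 0
    have hp : permAct (φ 0) 0 = 0 := rfl
    rw [add_zero, hp] at h
    exact (mul_eq_left.mp h.symm)
  -- if φ b = 1 and φ c = 1 then φ (b + c) = 1
  have hadd : ∀ b c : Fin n → ℕ, φ b = 1 → φ c = 1 → φ (b + c) = 1 := by
    intro b c hb hc
    rw [hcoc, hc, permAct_one, hb, one_mul]
  -- φ vanishes on t·c
  have hP' : ∀ N (c : Fin n → ℕ), Finset.univ.sum c = N → φ (fun i => t i * c i) = 1 := by
    intro N
    induction N using Nat.strong_induction_on with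
    | _ N ih =>
      intro c hN
      rcases Nat.eq_zero_or_pos N with h0 | hpos
      · subst h0
        have : c = 0 := by
          funext i
          exact Finset.sum_eq_zero_iff.mp hN i (Finset.mem_univ i)
        subst this
        rw [show (fun i => t i * (0 : Fin n → ℕ) i) = 0 from funext fun i => by simp]
        exact hφ0
      · -- pick i with c i > 0
        have : ∃ i, 0 < c i := by
          by_contra h
          push_neg at h
          have : Finset.univ.sum c = 0 := Finset.sum_eq_zero fun i _ => Nat.le_zero.mp (h i)
          omega
        obtain ⟨i, hi⟩ := this
        set c' := Function.update c i (c i - 1) with hc'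
        have hsum : Finset.univ.sum c' = N - 1 := by
          have h2 : c i + (Finset.univ \ {i}).sum c = N := by
            rw [← hN, Finset.sum_eq_add_sum_sdiff_singleton_of_mem (Finset.mem_univ i)]
          have h3 : Finset.univ.sum c' = c' i + (Finset.univ \ {i}).sum c' :=
            Finset.sum_eq_add_sum_sdiff_singleton_of_mem (Finset.mem_univ i) _
          have h4 : (Finset.univ \ {i}).sum c' = (Finset.univ \ {i}).sum c :=
            Finset.sum_congr rfl (fun j hj => by
              simp only [Finset.mem_sdiff, Finset.mem_singleton] at hj
              simp [hc', Function.update_of_ne hj.2])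
          have h5 : c' i = c i - 1 := by simp [hc']
          omega
        have hdecomp : (fun j => t j * c j) = (fun j => t j * c' j) + Pi.single i (t i) := by
          funext j
          by_cases hj : j = i
          · subst hj
            simp [hc', Function.update_self, Pi.single_eq_same]
            have : c j - 1 + 1 = c j := Nat.succ_pred_eq_of_pos hi
            nlinarith [Nat.succ_pred_eq_of_pos hi]
          · simp [hc', Function.update_of_ne hj, Pi.single_eq_of_ne hj]
        rw [hdecomp]
        exact hadd _ _ (ih (N - 1) (by omega) c' hsum) (hker i)
  have hP : ∀ c : Fin n → ℕ, φ (fun i => t i * c i) = 1 := fun c => hP' _ c rfl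
  -- multiplicativity on P₀
  have hmul : ∀ c d : Fin n → ℕ,
      v (fun i => t i * (c i + d i)) = v (fun i => t i * c i) * v (fun i => t i * d i) := by
    intro c d
    have h1 : (fun i => t i * (c i + d i)) = (fun i => t i * c i) + (fun i => t i * d i) := by
      funext i; exact Nat.mul_add _ _ _
    rw [h1, hφ, hP d, permAct_one]
  refine ⟨hmul, ?_, ?_⟩
  · intro c d h
    simp only at h
    have := hbij.injective h
    funext i
    have := congrFun this i
    have ht' := ht i
    exact Nat.eq_of_mul_eq_mul_left ht' this
  · intro i j
    have key : ∀ a b : Fin n → ℕ, φ a = 1 → φ b = 1 → v (a + b) = v a * v b := by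
      intro a b ha hb
      rw [hφ, hb, permAct_one]
    have h1 := key (Pi.single i (t i)) (Pi.single j (t j)) (hker i) (hker j)
    have h2 := key (Pi.single j (t j)) (Pi.single i (t i)) (hker j) (hker i)
    rw [← h1, ← h2, add_comm]
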